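/- Let u : ℤ⁴ → ℂ be nowhere zero and let μ⁽¹⁾, μ⁽²⁾, μ⁽³⁾, μ⁽⁰⁾ : ℤ → ℂ. Suppose u satisfies, for all l = (l₁,l₂,l₃,l₀) ∈ ℤ⁴, the full system: the three Q1_{δ=0} equations in cleared form (u(l)+u(l+e_i))(u(l+e_j)+u(l+e_i+e_j))·μ⁽ʲ⁾(l_j) = (u(l)+u(l+e_j))(u(l+e_i+e_j)+u(l+e_i))·μ⁽ⁱ⁾(l_i) for (i,j) ∈ {(1,2),(2,3),(3,1)}, and the three H1_{ε=0} equations (1/u(l)+1/u(l+e_k))(u(l+e₀)+u(l+e_k+e₀)) = −μ⁽ᵏ⁾(l_k)·μ⁽⁰⁾(l₀) for k ∈ {1,2,3}. Define ũ(l₁,l₂,l₃,l₀) = −1/u(l₁,l₂,l₃,−1−l₀) and parameters μ̃⁽⁰⁾(l) = μ⁽⁰⁾(−2−l), μ̃⁽¹⁾ = μ⁽¹⁾, μ̃⁽²⁾ = μ⁽²⁾, μ̃⁽³⁾ = μ⁽³⁾. Then ũ satisfies the same full system with parameters μ̃⁽¹⁾, μ̃⁽²⁾, μ̃⁽³⁾,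 μ̃⁽⁰⁾. -/
import Mathlib


/-- The multi-dimensionally consistent system on ℤ⁴: the three Q1_{δ=0}
equations (in cleared form) on the 2-faces in directions (1,2), (2,3), (3,1),
and the three H1_{ε=0} equations on the 2-faces in directions (k,0),
k = 1,2,3, with edge parameters μ⁽ⁱ⁾(l_i) and μ⁽⁰⁾(l₀). -/
def GarnierLatticeSystem (u : ℤ → ℤ → ℤ → ℤ → ℂ) (μ1 μ2 μ3 μ0 : ℤ → ℂ) : Prop :=
  (∀ l1 l2 l3 l0 : ℤ,
    (u l1 l2 l3 l0 + u (l1+1) l2 l3 l0)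
      * (u l1 (l2+1) l3 l0 + u (l1+1) (l2+1) l3 l0) * μ2 l2
    = (u l1 l2 l3 l0 + u l1 (l2+1) l3 l0)
      * (u (l1+1) (l2+1) l3 l0 + u (l1+1) l2 l3 l0) * μ1 l1)
  ∧ (∀ l1 l2 l3 l0 : ℤ,
    (u l1 l2 l3 l0 + u l1 (l2+1) l3 l0)
      * (u l1 l2 (l3+1) l0 + u l1 (l2+1) (l3+1) l0) * μ3 l3
    = (u l1 l2 l3 l0 + u l1 l2 (l3+1) l0)
      * (u l1 (l2+1) (l3+1) l0 + u l1 (l2+1) l3 l0) * μ2 l2)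
  ∧ (∀ l1 l2 l3 l0 : ℤ,
    (u l1 l2 l3 l0 + u l1 l2 (l3+1) l0)
      * (u (l1+1) l2 l3 l0 + u (l1+1) l2 (l3+1) l0) * μ1 l1
    = (u l1 l2 l3 l0 + u (l1+1) l2 l3 l0)
      * (u (l1+1) l2 (l3+1) l0 + u l1 l2 (l3+1) l0) * μ3 l3)
  ∧ (∀ l1 l2 l3 l0 : ℤ,
    (1 / u l1 l2 l3 l0 + 1 / u (l1+1) l2 l3 l0)
      * (u l1 l2 l3 (l0+1) + u (l1+1) l2 l3 (l0+1)) = -(μ1 l1 * μ0 l0))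
  ∧ (∀ l1 l2 l3 l0 : ℤ,
    (1 / u l1 l2 l3 l0 + 1 / u l1 (l2+1) l3 l0)
      * (u l1 l2 l3 (l0+1) + u l1 (l2+1) l3 (l0+1)) = -(μ2 l2 * μ0 l0))
  ∧ (∀ l1 l2 l3 l0 : ℤ,
    (1 / u l1 l2 l3 l0 + 1 / u l1 l2 (l3+1) l0)
      * (u l1 l2 l3 (l0+1) + u l1 l2 (l3+1) (l0+1)) = -(μ3 l3 * μ0 l0))

/-- The Dynkin-diagram automorphism ϖ₀ of the extended affine Weyl group
symmetry W̃(A₁⁽¹⁾) acting in the distinguished lattice direction 0: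
u ↦ −1/u(·,−1−l₀), μ⁽⁰⁾(l) ↦ μ⁽⁰⁾(−2−l) preserves the full system. -/
lemma q1_aux (a b c d m n : ℂ) (ha : a ≠ 0) (hb : b ≠ 0) (hc : c ≠ 0) (hd : d ≠ 0)
    (h : (a + b) * (c + d) * m = (a + c) * (d + b) * n) :
    (-1/a + -1/b) * (-1/c + -1/d) * m = (-1/a + -1/c) * (-1/d + -1/b) * n := by
  have e1 : (-1/a + -1/b) * (-1/c + -1/d) * m = ((a+b)*(c+d)*m)/(a*b*(c*d)) := by
    rw [div_add_div _ _ ha hb, div_add_div _ _ hc hd, div_mul_div_comm, div_mul_eq_mul_div]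
    congr 1; ring
  have e2 : (-1/a + -1/c) * (-1/d + -1/b) * n = ((a+c)*(d+b)*n)/(a*b*(c*d)) := by
    rw [div_add_div _ _ ha hc, div_add_div _ _ hd hb, div_mul_div_comm, div_mul_eq_mul_div]
    rw [show a*c*(d*b) = a*b*(c*d) by ring]
    congr 1; ring
  rw [e1, e2, h]

lemma h1_aux (a b c d m : ℂ) (hc : c ≠ 0) (hd : d ≠ 0)
    (h : (1/c + 1/d) * (a + b) = -m) :
    (1/(-1/a) + 1/(-1/b)) * (-1/c + -1/d) = -m := by
  have ea : (1:ℂ)/(-1/a) = -a := by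
    rcases eq_or_ne a 0 with h0 | h0
    · simp [h0]
    · field_simp
  have eb : (1:ℂ)/(-1/b) = -b := by
    rcases eq_or_ne b 0 with h0 | h0
    · simp [h0]
    · field_simp
  rw [ea, eb, ← h, div_add_div _ _ hc hd, div_add_div _ _ hc hd,
    mul_div_assoc', div_mul_eq_mul_div]
  congr 1; ring

theorem stmt_11 (u : ℤ → ℤ → ℤ → ℤ → ℂ) (μ1 μ2 μ3 μ0 : ℤ → ℂ)
    (hu : ∀ l1 l2 l3 l0 : ℤ, u l1 l2 l3 l0 ≠ 0)
    (hsys : GarnierLatticeSystem u μ1 μ2 μ3 μ0) :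
    GarnierLatticeSystem (fun l1 l2 l3 l0 => -1 / u l1 l2 l3 (-1 - l0))
      μ1 μ2 μ3 (fun l => μ0 (-2 - l)) := by
  obtain ⟨h12, h23, h31, h10, h20, h30⟩ := hsys
  have e2 : ∀ l0 : ℤ, (-1 - (l0 + 1) : ℤ) = -2 - l0 := fun l0 => by ring
  have e1 : ∀ l0 : ℤ, (-2 - l0 + 1 : ℤ) = -1 - l0 := fun l0 => by ring
  refine ⟨?_, ?_, ?_, ?_, ?_, ?_⟩
  · intro l1 l2 l3 l0
    exact q1_aux _ _ _ _ _ _ (hu _ _ _ _) (hu _ _ _ _) (hu _ _ _ _) (hu _ _ _ _)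
      (h12 l1 l2 l3 (-1 - l0))
  · intro l1 l2 l3 l0
    exact q1_aux _ _ _ _ _ _ (hu _ _ _ _) (hu _ _ _ _) (hu _ _ _ _) (hu _ _ _ _)
      (h23 l1 l2 l3 (-1 - l0))
  · intro l1 l2 l3 l0
    exact q1_aux _ _ _ _ _ _ (hu _ _ _ _) (hu _ _ _ _) (hu _ _ _ _) (hu _ _ _ _)
      (h31 l1 l2 l3 (-1 - l0))
  · intro l1 l2 l3 l0
    have h := h10 l1 l2 l3 (-2 - l0)
    rw [e1] at h
    simp only [e2]
    exact h1_aux _ _ _ _ _ (hu _ _ _ _) (hu _ _ _ _) h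
  · intro l1 l2 l3 l0
    have h := h20 l1 l2 l3 (-2 - l0)
    rw [e1] at h
    simp only [e2]
    exact h1_aux _ _ _ _ _ (hu _ _ _ _) (hu _ _ _ _) h
  · intro l1 l2 l3 l0
    have h := h30 l1 l2 l3 (-2 - l0)
    rw [e1] at h
    simp only [e2]
    exact h1_aux _ _ _ _ _ (hu _ _ _ _) (hu _ _ _ _) h
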